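/- The class of lattices has the superamalgamation property: for all lattices A, B, C and injective lattice homomorphisms f : C → A, g : C → B, there exist a lattice D and injective lattice homomorphisms h : A → D, k : B → D such that h ∘ f = k ∘ g; whenever h(a) = k(b) there is c ∈ C with a = f(c) and b = g(c); whenever h(a) ≤ k(b) there is c ∈ C with a ≤ f(c) and g(c) ≤ b; and whenever k(b) ≤ h(a) there is c ∈ C with b ≤ g(c) and f(c) ≤ a. -/

import Mathlib

universe u

namespace LatSuperAmalg

variable {A B C : Type u} [Lattice A] [Lattice B] [Lattice C]

theorem hom_le_iff {f : LatticeHom C A} (hf : Function.Injective f) {c c' : C} :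
    f c ≤ f c' ↔ c ≤ c' := by
  constructor
  · intro h
    have h2 : f (c ⊓ c') = f c := by rw [map_inf]; exact inf_eq_left.mpr h
    exact inf_eq_left.mp (hf h2)
  · intro h
    have h2 : f (c ⊓ c') = f c := by rw [inf_eq_left.mpr h]
    rw [map_inf] at h2
    exact inf_eq_left.mp h2

variable (f : LatticeHom C A) (g : LatticeHom C B)

def R : A ⊕ B → A ⊕ B → Prop
  | .inl a, .inl a' => a ≤ a'
  | .inl a, .inr b => ∃ c, a ≤ f c ∧ g c ≤ b
  | .inr b, .inl a => ∃ c, b ≤ g c ∧ f c ≤ a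
  | .inr b, .inr b' => b ≤ b'

theorem R_refl (x : A ⊕ B) : R f g x x := by cases x <;> simp [R]

theorem R_trans (hf : Function.Injective f) (hg : Function.Injective g)
    {x y z : A ⊕ B} (hxy : R f g x y) (hyz : R f g y z) : R f g x z := by
  cases x <;> cases y <;> cases z <;> simp only [R] at *
  · exact le_trans hxy hyz
  · obtain ⟨c, h1, h2⟩ := hyz; exact ⟨c, le_trans hxy h1, h2⟩
  · obtain ⟨c, h1, h2⟩ := hxy
    obtain ⟨c', h3, h4⟩ := hyz
    have : c ≤ c' := (hom_le_iff hg).mp (le_trans h2 h3)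
    exact le_trans h1 (le_trans ((hom_le_iff hf).mpr this) h4)
  · obtain ⟨c, h1, h2⟩ := hxy; exact ⟨c, h1, le_trans h2 hyz⟩
  · obtain ⟨c, h1, h2⟩ := hxy; exact ⟨c, h1, le_trans h2 hyz⟩
  · obtain ⟨c, h1, h2⟩ := hxy
    obtain ⟨c', h3, h4⟩ := hyz
    have : c ≤ c' := (hom_le_iff hf).mp (le_trans h2 h3)
    exact le_trans h1 (le_trans ((hom_le_iff hg).mpr this) h4)
  · obtain ⟨c, h1, h2⟩ := hyz; exact ⟨c, le_trans hxy h1, h2⟩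
  · exact le_trans hxy hyz

def up (S : Set (A ⊕ B)) : Set (A ⊕ B) := {y | ∀ x ∈ S, R f g x y}
def lo (T : Set (A ⊕ B)) : Set (A ⊕ B) := {x | ∀ y ∈ T, R f g x y}
def cl (S : Set (A ⊕ B)) : Set (A ⊕ B) := lo f g (up f g S)

theorem subset_cl (S : Set (A ⊕ B)) : S ⊆ cl f g S :=
  fun x hx y hy => hy x hx

theorem up_anti {S T : Set (A ⊕ B)} (h : S ⊆ T) : up f g T ⊆ up f g S :=
  fun y hy x hx => hy x (h hx)

theorem lo_anti {S T : Set (A ⊕ B)} (h : S ⊆ T) : lo f g T ⊆ lo f g S :=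
  fun x hx y hy => hx y (h hy)

theorem cl_mono {S T : Set (A ⊕ B)} (h : S ⊆ T) : cl f g S ⊆ cl f g T :=
  lo_anti f g (up_anti f g h)

theorem subset_up_lo (T : Set (A ⊕ B)) : T ⊆ up f g (lo f g T) :=
  fun y hy x hx => hx y hy

theorem cl_cl (S : Set (A ⊕ B)) : cl f g (cl f g S) = cl f g S :=
  Set.Subset.antisymm (lo_anti f g (subset_up_lo f g (up f g S))) (subset_cl f g _)

theorem cl_inter {S T : Set (A ⊕ B)} (hS : cl f g S = S) (hT : cl f g T = T) :
    cl f g (S ∩ T) = S ∩ T := by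
  apply Set.Subset.antisymm _ (subset_cl f g _)
  intro x hx
  exact ⟨hS ▸ cl_mono f g Set.inter_subset_left hx,
         hT ▸ cl_mono f g Set.inter_subset_right hx⟩

def Cut : Type u := {S : Set (A ⊕ B) // cl f g S = S}

instance : PartialOrder (Cut f g) := Subtype.partialOrder _

theorem cut_le_iff {S T : Cut f g} : S ≤ T ↔ S.1 ⊆ T.1 := Iff.rfl

instance : Lattice (Cut f g) :=
  { (inferInstance : PartialOrder (Cut f g)) with
    sup := fun S T => ⟨cl f g (S.1 ∪ T.1), cl_cl f g _⟩
    le_sup_left := fun S T =>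
      Set.Subset.trans Set.subset_union_left (subset_cl f g _)
    le_sup_right := fun S T =>
      Set.Subset.trans Set.subset_union_right (subset_cl f g _)
    sup_le := fun S T U hS hT => by
      rw [cut_le_iff] at hS hT
      show cl f g (S.1 ∪ T.1) ⊆ U.1
      calc cl f g (S.1 ∪ T.1) ⊆ cl f g U.1 := cl_mono f g (Set.union_subset hS hT)
        _ = U.1 := U.2
    inf := fun S T => ⟨S.1 ∩ T.1, cl_inter f g S.2 T.2⟩
    inf_le_left := fun S T => Set.inter_subset_left
    inf_le_right := fun S T => Set.inter_subset_right
    le_inf := fun S T U hS hT => Set.subset_inter hS hT }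

def dn (x : A ⊕ B) : Set (A ⊕ B) := {y | R f g y x}

theorem cl_dn (x : A ⊕ B) : cl f g (dn f g x) = dn f g x := by
  apply Set.Subset.antisymm _ (subset_cl f g _)
  intro w hw
  exact hw x (fun y hy => hy)

def pt (x : A ⊕ B) : Cut f g := ⟨dn f g x, cl_dn f g x⟩

theorem closed_downset (hf : Function.Injective f) (hg : Function.Injective g)
    {S : Set (A ⊕ B)} (hS : cl f g S = S) {x y : A ⊕ B}
    (hxy : R f g x y) (hy : y ∈ S) : x ∈ S := by
  rw [← hS] at hy ⊢
  intro z hz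
  exact R_trans f g hf hg hxy (hy z hz)

theorem pt_le_iff (hf : Function.Injective f) (hg : Function.Injective g)
    {x : A ⊕ B} {S : Cut f g} : pt f g x ≤ S ↔ x ∈ S.1 :=
  ⟨fun h => (cut_le_iff f g).mp h (R_refl f g x),
   fun hx => (cut_le_iff f g).mpr fun y hy => closed_downset f g hf hg S.2 hy hx⟩

def hA (hf : Function.Injective f) (hg : Function.Injective g) :
    LatticeHom A (Cut f g) where
  toFun a := pt f g (.inl a)
  map_inf' a a' := by
    apply Subtype.ext
    ext x
    show R f g x (.inl (a ⊓ a')) ↔ x ∈ dn f g (.inl a) ∩ dn f g (.inl a')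
    cases x with
    | inl a'' => exact le_inf_iff
    | inr b =>
      constructor
      · rintro ⟨c, h1, h2⟩
        exact ⟨⟨c, h1, le_trans h2 inf_le_left⟩, ⟨c, h1, le_trans h2 inf_le_right⟩⟩
      · rintro ⟨⟨c, h1, h2⟩, ⟨c', h3, h4⟩⟩
        refine ⟨c ⊓ c', ?_, ?_⟩
        · rw [map_inf]; exact le_inf h1 h3
        · rw [map_inf]; exact le_inf (le_trans inf_le_left h2) (le_trans inf_le_right h4)
  map_sup' a a' := by
    apply le_antisymm
    · rw [pt_le_iff f g hf hg]
      show Sum.inl (a ⊔ a') ∈ cl f g (dn f g (Sum.inl a) ∪ dn f g (Sum.inl a'))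
      intro z hz
      have h1 : R f g (.inl a) z := hz _ (Or.inl (R_refl f g (.inl a)))
      have h2 : R f g (.inl a') z := hz _ (Or.inr (R_refl f g (.inl a')))
      cases z with
      | inl a'' => exact sup_le h1 h2
      | inr b =>
        obtain ⟨c, hc1, hc2⟩ := h1
        obtain ⟨c', hc1', hc2'⟩ := h2
        refine ⟨c ⊔ c', ?_, ?_⟩
        · rw [map_sup]; exact sup_le (le_trans hc1 le_sup_left) (le_trans hc1' le_sup_right)
        · rw [map_sup]; exact sup_le hc2 hc2'
    · apply sup_le <;> rw [pt_le_iff f g hf hg]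
      · exact (le_sup_left : a ≤ a ⊔ a')
      · exact (le_sup_right : a' ≤ a ⊔ a')

def hB (hf : Function.Injective f) (hg : Function.Injective g) :
    LatticeHom B (Cut f g) where
  toFun b := pt f g (.inr b)
  map_inf' b b' := by
    apply Subtype.ext
    ext x
    show R f g x (.inr (b ⊓ b')) ↔ x ∈ dn f g (.inr b) ∩ dn f g (.inr b')
    cases x with
    | inr b'' => exact le_inf_iff
    | inl a =>
      constructor
      · rintro ⟨c, h1, h2⟩
        exact ⟨⟨c, h1, le_trans h2 inf_le_left⟩, ⟨c, h1, le_trans h2 inf_le_right⟩⟩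
      · rintro ⟨⟨c, h1, h2⟩, ⟨c', h3, h4⟩⟩
        refine ⟨c ⊓ c', ?_, ?_⟩
        · rw [map_inf]; exact le_inf h1 h3
        · rw [map_inf]; exact le_inf (le_trans inf_le_left h2) (le_trans inf_le_right h4)
  map_sup' b b' := by
    apply le_antisymm
    · rw [pt_le_iff f g hf hg]
      show Sum.inr (b ⊔ b') ∈ cl f g (dn f g (Sum.inr b) ∪ dn f g (Sum.inr b'))
      intro z hz
      have h1 : R f g (.inr b) z := hz _ (Or.inl (R_refl f g (.inr b)))
      have h2 : R f g (.inr b') z := hz _ (Or.inr (R_refl f g (.inr b')))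
      cases z with
      | inr b'' => exact sup_le h1 h2
      | inl a =>
        obtain ⟨c, hc1, hc2⟩ := h1
        obtain ⟨c', hc1', hc2'⟩ := h2
        refine ⟨c ⊔ c', ?_, ?_⟩
        · rw [map_sup]; exact sup_le (le_trans hc1 le_sup_left) (le_trans hc1' le_sup_right)
        · rw [map_sup]; exact sup_le hc2 hc2'
    · apply sup_le <;> rw [pt_le_iff f g hf hg]
      · exact (le_sup_left : b ≤ b ⊔ b')
      · exact (le_sup_right : b' ≤ b ⊔ b')

variable (hf : Function.Injective f) (hg : Function.Injective g)
include hf hg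

theorem hA_apply (a : A) : hA f g hf hg a = pt f g (.inl a) := rfl
theorem hB_apply (b : B) : hB f g hf hg b = pt f g (.inr b) := rfl

theorem pt_le_pt_iff {x y : A ⊕ B} : pt f g x ≤ pt f g y ↔ R f g x y := by
  rw [pt_le_iff f g hf hg]
  exact ⟨fun h => h, fun h => h⟩

theorem pt_eq_pt_iff {x y : A ⊕ B} :
    pt f g x = pt f g y ↔ R f g x y ∧ R f g y x := by
  constructor
  · intro h
    exact ⟨(pt_le_pt_iff f g hf hg).mp h.le, (pt_le_pt_iff f g hf hg).mp h.ge⟩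
  · intro ⟨h1, h2⟩
    exact le_antisymm ((pt_le_pt_iff f g hf hg).mpr h1) ((pt_le_pt_iff f g hf hg).mpr h2)

theorem hA_injective : Function.Injective (hA f g hf hg) := by
  intro a a' hEq
  rw [hA_apply, hA_apply, pt_eq_pt_iff f g hf hg] at hEq
  exact le_antisymm hEq.1 hEq.2

theorem hB_injective : Function.Injective (hB f g hf hg) := by
  intro b b' hEq
  rw [hB_apply, hB_apply, pt_eq_pt_iff f g hf hg] at hEq
  exact le_antisymm hEq.1 hEq.2

theorem compat (c : C) : hA f g hf hg (f c) = hB f g hf hg (g c) := by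
  rw [hA_apply, hB_apply, pt_eq_pt_iff f g hf hg]
  exact ⟨⟨c, le_refl _, le_refl _⟩, ⟨c, le_refl _, le_refl _⟩⟩

theorem strong (a : A) (b : B) (h : hA f g hf hg a = hB f g hf hg b) :
    ∃ c, a = f c ∧ b = g c := by
  rw [hA_apply, hB_apply, pt_eq_pt_iff f g hf hg] at h
  obtain ⟨⟨c, hac, hgcb⟩, ⟨c', hbc', hfc'a⟩⟩ := h
  have e : c = c' := le_antisymm ((hom_le_iff hg).mp (hgcb.trans hbc'))
    ((hom_le_iff hf).mp (hfc'a.trans hac))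
  subst e
  exact ⟨c, le_antisymm hac hfc'a, le_antisymm hbc' hgcb⟩

theorem superAB (a : A) (b : B) (h : hA f g hf hg a ≤ hB f g hf hg b) :
    ∃ c, a ≤ f c ∧ g c ≤ b := by
  rw [hA_apply, hB_apply, pt_le_pt_iff f g hf hg] at h
  exact h

theorem superBA (a : A) (b : B) (h : hB f g hf hg b ≤ hA f g hf hg a) :
    ∃ c, b ≤ g c ∧ f c ≤ a := by
  rw [hA_apply, hB_apply, pt_le_pt_iff f g hf hg] at h
  exact h

end LatSuperAmalg

/-- The class of lattices has the superamalgamation property. -/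
theorem lattice_superamalgamation {A B C : Type u}
    [Lattice A] [Lattice B] [Lattice C]
    (f : LatticeHom C A) (g : LatticeHom C B)
    (hf : Function.Injective f) (hg : Function.Injective g) :
    ∃ (D : Type u) (_ : Lattice D) (h : LatticeHom A D) (k : LatticeHom B D),
      Function.Injective h ∧ Function.Injective k ∧
      (∀ c, h (f c) = k (g c)) ∧
      (∀ a b, h a = k b → ∃ c, a = f c ∧ b = g c) ∧
      (∀ a b, h a ≤ k b → ∃ c, a ≤ f c ∧ g c ≤ b) ∧
      (∀ a b, k b ≤ h a → ∃ c, b ≤ g c ∧ f c ≤ a) := by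
  exact ⟨LatSuperAmalg.Cut f g, inferInstance,
    LatSuperAmalg.hA f g hf hg, LatSuperAmalg.hB f g hf hg,
    LatSuperAmalg.hA_injective f g hf hg, LatSuperAmalg.hB_injective f g hf hg,
    LatSuperAmalg.compat f g hf hg, LatSuperAmalg.strong f g hf hg,
    LatSuperAmalg.superAB f g hf hg, LatSuperAmalg.superBA f g hf hg⟩
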